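/- Suppose a double complex D^{*,*} of R-modules has exact columns. Then its left truncated totalisation ltTot(D), with n-th term the left truncated product ltΠ_p D^{p,n-p} = ⊕_{p<0} D^{p,n-p} ⊕ Π_{p≥0} D^{p,n-p} and differential induced by d_h + d_v, is acyclic. -/
import Mathlib


/-- Transport along equalities of indices of a doubly indexed family of modules. -/
def castM {R : Type} [Ring R] (D : ℤ → ℤ → Type)
    [∀ p q, AddCommGroup (D p q)] [∀ p q, Module R (D p q)] :
    ∀ {p q p' q' : ℤ}, p = p' → q = q' → (D p q →ₗ[R] D p' q')
  | _, _, _, _, rfl, rfl => LinearMap.id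

/-- The differential `d_h + d_v` of the totalisation of a double complex, with `n`-th term
the full product `∀ p, D p (n - p)`.  Restricted to elements whose support is bounded below
(in `p`) this is the differential of the left truncated totalisation `ltTot`. -/
def totd {R : Type} [Ring R] (D : ℤ → ℤ → Type)
    [∀ p q, AddCommGroup (D p q)] [∀ p q, Module R (D p q)]
    (dh : ∀ p q, D p q →ₗ[R] D (p + 1) q) (dv : ∀ p q, D p q →ₗ[R] D p (q + 1))
    (n : ℤ) : (∀ p, D p (n - p)) →ₗ[R] (∀ p, D p (n + 1 - p)) :=
  LinearMap.pi fun p =>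
    (castM D (by omega : p - 1 + 1 = p) (by omega : n - (p - 1) = n + 1 - p)).comp
        ((dh (p - 1) (n - (p - 1))).comp (LinearMap.proj (p - 1)))
      + (castM D rfl (by omega : n - p + 1 = n + 1 - p)).comp
        ((dv p (n - p)).comp (LinearMap.proj p))

section Aux

variable {R : Type} [Ring R] {D : ℤ → ℤ → Type}
  [∀ p q, AddCommGroup (D p q)] [∀ p q, Module R (D p q)]

theorem castM_self {p q : ℤ} (h1 : p = p) (h2 : q = q) (x : D p q) :
    castM (R := R) D h1 h2 x = x := rfl

theorem castM_castM {p q p' q' p'' q'' : ℤ} (h1 : p = p') (h2 : q = q')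
    (h3 : p' = p'') (h4 : q' = q'') (x : D p q) :
    castM (R := R) D h3 h4 (castM (R := R) D h1 h2 x) =
      castM (R := R) D (h1.trans h3) (h2.trans h4) x := by
  subst h1; subst h2; subst h3; subst h4; rfl

theorem castM_inj {p q p' q' : ℤ} (h1 : p = p') (h2 : q = q') {x y : D p q}
    (h : castM (R := R) D h1 h2 x = castM (R := R) D h1 h2 y) : x = y := by
  subst h1; subst h2; exact h

variable (Dh : ∀ p q, D p q →ₗ[R] D (p + 1) q) (Dv : ∀ p q, D p q →ₗ[R] D p (q + 1))

theorem Dh_castM {p q p' q' : ℤ} (h1 : p = p') (h2 : q = q') (x : D p q) :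
    Dh p' q' (castM (R := R) D h1 h2 x) =
      castM (R := R) D (congrArg (· + 1) h1) h2 (Dh p q x) := by
  subst h1; subst h2; rfl

theorem Dv_castM {p q p' q' : ℤ} (h1 : p = p') (h2 : q = q') (x : D p q) :
    Dv p' q' (castM (R := R) D h1 h2 x) =
      castM (R := R) D h1 (congrArg (· + 1) h2) (Dv p q x) := by
  subst h1; subst h2; rfl

theorem totd_apply (n : ℤ) (bf : ∀ p, D p (n - p)) (p : ℤ) :
    totd D Dh Dv n bf p
      = castM (R := R) D (by omega : p - 1 + 1 = p) (by omega : n - (p - 1) = n + 1 - p)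
          (Dh (p - 1) (n - (p - 1)) (bf (p - 1)))
        + castM (R := R) D rfl (by omega : n - p + 1 = n + 1 - p) (Dv p (n - p) (bf p)) :=
  rfl

variable (n : ℤ) (a : ∀ p, D p (n + 1 - p))

theorem a_congr {p p' : ℤ} (h : p = p') :
    castM (R := R) D h (by rw [h]) (a p) = a p' := by subst h; rfl

/-- The inductive invariant: `a p - dv x` is killed by `dh`. -/
def Qz (p : ℤ) (x : D p (n - p)) : Prop :=
  Dh p (n + 1 - p) (a p - castM (R := R) D rfl (by omega : n - p + 1 = n + 1 - p)
    (Dv p (n - p) x)) = 0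



section Chain

variable (hDhh : ∀ p q (x : D p q), Dh (p + 1) q (Dh p q x) = 0)
variable (hDanti : ∀ p q (x : D p q), Dh p (q + 1) (Dv p q x) + Dv (p + 1) q (Dh p q x) = 0)
variable (hcols : ∀ p q (x : D p (q + 1)), Dv p (q + 1) x = 0 → ∃ y : D p q, Dv p q y = x)
variable (hco : ∀ p p' : ℤ, ∀ h : p' = p - 1,
    Dv p (n + 1 - p) (a p) = castM (R := R) D (by omega : p' + 1 = p)
      (by omega : n + 1 - p' = n + 1 - p + 1) (-(Dh p' (n + 1 - p') (a p'))))

include hcols hco in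
theorem ex_zero (k : ℤ) (hk0 : a (k - 1) = 0) :
    ∃ y : D k (n - k), Dv k (n - k) y
      = castM (R := R) D rfl (by omega : n + 1 - k = n - k + 1) (a k) := by
  apply hcols k (n - k)
  rw [Dv_castM, hco k (k - 1) rfl, hk0]
  simp only [map_neg, map_zero, neg_zero]

include hDanti hcols hco in
theorem ex_step (p : ℤ) (x : D p (n - p)) (hx : Qz Dh Dv n a p x) :
    ∃ y : D (p + 1) (n - (p + 1)), Dv (p + 1) (n - (p + 1)) y
      = castM (R := R) D rfl (by omega : n + 1 - (p + 1) = n - (p + 1) + 1)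
          (a (p + 1) - castM (R := R) D rfl (by omega : n - p = n + 1 - (p + 1))
            (Dh p (n - p) x)) := by
  apply hcols (p + 1) (n - (p + 1))
  rw [Dv_castM, map_sub, Dv_castM, hco (p + 1) p (by omega)]
  have h1 : Dv (p + 1) (n - p) (Dh p (n - p) x)
      = -(Dh p (n - p + 1) (Dv p (n - p) x)) :=
    eq_neg_of_add_eq_zero_right (hDanti p (n - p) x)
  rw [h1, map_neg, map_neg]
  have hx' : Dh p (n + 1 - p) (a p - castM (R := R) D rfl
      (by omega : n - p + 1 = n + 1 - p) (Dv p (n - p) x)) = 0 := hx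
  have h2 : castM (R := R) D rfl
        (congrArg (· + 1) (by omega : n - p = n + 1 - (p + 1)))
        (Dh p (n - p + 1) (Dv p (n - p) x))
      = castM (R := R) D (by omega : p + 1 = p + 1)
        (by omega : n + 1 - p = n + 1 - (p + 1) + 1)
        (Dh p (n + 1 - p) (castM (R := R) D rfl (by omega : n - p + 1 = n + 1 - p)
          (Dv p (n - p) x))) := by
    rw [Dh_castM, castM_castM]
  rw [h2, neg_sub_neg, ← map_sub, ← map_sub, ← neg_sub (a p), map_neg, hx',
    neg_zero, map_zero, map_zero]

theorem Qz_of_spec0 (k : ℤ) (y : D k (n - k))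
    (hy : Dv k (n - k) y = castM (R := R) D rfl (by omega : n + 1 - k = n - k + 1) (a k)) :
    Qz Dh Dv n a k y := by
  show Dh k (n + 1 - k) _ = 0
  rw [hy, castM_castM, castM_self, sub_self, map_zero]

theorem Qz_of_spec (hDhh : ∀ p q (x : D p q), Dh (p + 1) q (Dh p q x) = 0)
    (p : ℤ) (x : D p (n - p)) (y : D (p + 1) (n - (p + 1)))
    (hy : Dv (p + 1) (n - (p + 1)) y
      = castM (R := R) D rfl (by omega : n + 1 - (p + 1) = n - (p + 1) + 1)
          (a (p + 1) - castM (R := R) D rfl (by omega : n - p = n + 1 - (p + 1))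
            (Dh p (n - p) x))) :
    Qz Dh Dv n a (p + 1) y := by
  show Dh (p + 1) (n + 1 - (p + 1)) _ = 0
  rw [hy, castM_castM, castM_self, sub_sub_cancel, Dh_castM, hDhh, map_zero]

theorem Qz_congr {p p' : ℤ} (h : p = p') (h2 : n - p = n - p') (x : D p (n - p))
    (hx : Qz Dh Dv n a p x) : Qz Dh Dv n a p' (castM (R := R) D h h2 x) := by
  subst h; exact hx

/-- Transport an element-with-invariant along an index equality. -/
def subCast {p p' : ℤ} (h : p = p') (s : {x : D p (n - p) // Qz Dh Dv n a p x}) :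
    {x : D p' (n - p') // Qz Dh Dv n a p' x} :=
  ⟨castM (R := R) D h (by rw [h]) s.1, Qz_congr Dh Dv n a h (by rw [h]) s.1 s.2⟩

variable {k : ℤ}

/-- The staircase of preimages, starting at position `k`. -/
noncomputable def chain
    (hDhh : ∀ p q (x : D p q), Dh (p + 1) q (Dh p q x) = 0)
    (hDanti : ∀ p q (x : D p q), Dh p (q + 1) (Dv p q x) + Dv (p + 1) q (Dh p q x) = 0)
    (hcols : ∀ p q (x : D p (q + 1)), Dv p (q + 1) x = 0 → ∃ y : D p q, Dv p q y = x)
    (hco : ∀ p p' : ℤ, ∀ h : p' = p - 1,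
      Dv p (n + 1 - p) (a p) = castM (R := R) D (by omega : p' + 1 = p)
        (by omega : n + 1 - p' = n + 1 - p + 1) (-(Dh p' (n + 1 - p') (a p'))))
    (hk0 : a (k - 1) = 0) :
    ∀ m : ℕ, {x : D (k + (m : ℤ)) (n - (k + (m : ℤ))) // Qz Dh Dv n a (k + (m : ℤ)) x}
  | 0 => subCast Dh Dv n a (by omega)
      ⟨(ex_zero Dh Dv n a hcols hco k hk0).choose,
        Qz_of_spec0 Dh Dv n a k _ (ex_zero Dh Dv n a hcols hco k hk0).choose_spec⟩
  | m + 1 => subCast Dh Dv n a (by omega)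
      ⟨(ex_step Dh Dv n a hDanti hcols hco (k + (m : ℤ))
          (chain hDhh hDanti hcols hco hk0 m).1
          (chain hDhh hDanti hcols hco hk0 m).2).choose,
        Qz_of_spec Dh Dv n a hDhh (k + (m : ℤ)) _ _
          (ex_step Dh Dv n a hDanti hcols hco (k + (m : ℤ))
            (chain hDhh hDanti hcols hco hk0 m).1
            (chain hDhh hDanti hcols hco hk0 m).2).choose_spec⟩

theorem chain_zero_spec
    (hDhh : ∀ p q (x : D p q), Dh (p + 1) q (Dh p q x) = 0)
    (hDanti : ∀ p q (x : D p q), Dh p (q + 1) (Dv p q x) + Dv (p + 1) q (Dh p q x) = 0)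
    (hcols : ∀ p q (x : D p (q + 1)), Dv p (q + 1) x = 0 → ∃ y : D p q, Dv p q y = x)
    (hco : ∀ p p' : ℤ, ∀ h : p' = p - 1,
      Dv p (n + 1 - p) (a p) = castM (R := R) D (by omega : p' + 1 = p)
        (by omega : n + 1 - p' = n + 1 - p + 1) (-(Dh p' (n + 1 - p') (a p'))))
    (hk0 : a (k - 1) = 0) :
    Dv (k + ((0 : ℕ) : ℤ)) (n - (k + ((0 : ℕ) : ℤ)))
        (chain Dh Dv n a hDhh hDanti hcols hco hk0 0).1
      = castM (R := R) D (by omega : k = k + ((0 : ℕ) : ℤ))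
          (by omega : n + 1 - k = n - (k + ((0 : ℕ) : ℤ)) + 1) (a k) := by
  have e : (chain Dh Dv n a hDhh hDanti hcols hco hk0 0).1
      = castM (R := R) D (by omega : k = k + ((0 : ℕ) : ℤ))
          (by omega : n - k = n - (k + ((0 : ℕ) : ℤ)))
          (ex_zero Dh Dv n a hcols hco k hk0).choose := rfl
  rw [e, Dv_castM, (ex_zero Dh Dv n a hcols hco k hk0).choose_spec, castM_castM]

theorem chain_succ_spec
    (hDhh : ∀ p q (x : D p q), Dh (p + 1) q (Dh p q x) = 0)
    (hDanti : ∀ p q (x : D p q), Dh p (q + 1) (Dv p q x) + Dv (p + 1) q (Dh p q x) = 0)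
    (hcols : ∀ p q (x : D p (q + 1)), Dv p (q + 1) x = 0 → ∃ y : D p q, Dv p q y = x)
    (hco : ∀ p p' : ℤ, ∀ h : p' = p - 1,
      Dv p (n + 1 - p) (a p) = castM (R := R) D (by omega : p' + 1 = p)
        (by omega : n + 1 - p' = n + 1 - p + 1) (-(Dh p' (n + 1 - p') (a p'))))
    (hk0 : a (k - 1) = 0) (m : ℕ) :
    Dv (k + ((m + 1 : ℕ) : ℤ)) (n - (k + ((m + 1 : ℕ) : ℤ)))
        (chain Dh Dv n a hDhh hDanti hcols hco hk0 (m + 1)).1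
      = castM (R := R) D (by omega : k + (m : ℤ) + 1 = k + ((m + 1 : ℕ) : ℤ))
          (by omega : n + 1 - (k + (m : ℤ) + 1) = n - (k + ((m + 1 : ℕ) : ℤ)) + 1)
          (a (k + (m : ℤ) + 1) - castM (R := R) D rfl
            (by omega : n - (k + (m : ℤ)) = n + 1 - (k + (m : ℤ) + 1))
            (Dh (k + (m : ℤ)) (n - (k + (m : ℤ)))
              (chain Dh Dv n a hDhh hDanti hcols hco hk0 m).1)) := by
  have e : (chain Dh Dv n a hDhh hDanti hcols hco hk0 (m + 1)).1
      = castM (R := R) D (by omega : k + (m : ℤ) + 1 = k + ((m + 1 : ℕ) : ℤ))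
          (by omega : n - (k + (m : ℤ) + 1) = n - (k + ((m + 1 : ℕ) : ℤ)))
          (ex_step Dh Dv n a hDanti hcols hco (k + (m : ℤ))
            (chain Dh Dv n a hDhh hDanti hcols hco hk0 m).1
            (chain Dh Dv n a hDhh hDanti hcols hco hk0 m).2).choose := rfl
  rw [e, Dv_castM,
    (ex_step Dh Dv n a hDanti hcols hco (k + (m : ℤ))
      (chain Dh Dv n a hDhh hDanti hcols hco hk0 m).1
      (chain Dh Dv n a hDhh hDanti hcols hco hk0 m).2).choose_spec, castM_castM]

theorem chain_congr
    (hDhh : ∀ p q (x : D p q), Dh (p + 1) q (Dh p q x) = 0)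
    (hDanti : ∀ p q (x : D p q), Dh p (q + 1) (Dv p q x) + Dv (p + 1) q (Dh p q x) = 0)
    (hcols : ∀ p q (x : D p (q + 1)), Dv p (q + 1) x = 0 → ∃ y : D p q, Dv p q y = x)
    (hco : ∀ p p' : ℤ, ∀ h : p' = p - 1,
      Dv p (n + 1 - p) (a p) = castM (R := R) D (by omega : p' + 1 = p)
        (by omega : n + 1 - p' = n + 1 - p + 1) (-(Dh p' (n + 1 - p') (a p'))))
    (hk0 : a (k - 1) = 0) {m m' : ℕ} (h : m = m') {s : ℤ}
    (e1 : k + (m : ℤ) = s) (e2 : n - (k + (m : ℤ)) = n - s)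
    (f1 : k + (m' : ℤ) = s) (f2 : n - (k + (m' : ℤ)) = n - s) :
    castM (R := R) D e1 e2 (chain Dh Dv n a hDhh hDanti hcols hco hk0 m).1
      = castM (R := R) D f1 f2 (chain Dh Dv n a hDhh hDanti hcols hco hk0 m').1 := by
  subst h; rfl

end Chain
end Aux


/-- Suppose a double complex `D` of `R`-modules (anticommuting differentials squaring to
zero) has exact columns.  Then its left truncated totalisation — whose `n`-th term consists of
the elements of `∀ p, D p (n - p)` which vanish for `p` sufficiently small — is acyclic:
every left-truncated cocycle is the boundary of a left-truncated element. -/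
theorem ltTot_acyclic_of_exact_columns (R : Type) [Ring R]
    (D : ℤ → ℤ → Type)
    [∀ p q, AddCommGroup (D p q)] [∀ p q, Module R (D p q)]
    (Dh : ∀ p q, D p q →ₗ[R] D (p + 1) q) (Dv : ∀ p q, D p q →ₗ[R] D p (q + 1))
    (hDhh : ∀ p q (x : D p q), Dh (p + 1) q (Dh p q x) = 0)
    (hDvv : ∀ p q (x : D p q), Dv p (q + 1) (Dv p q x) = 0)
    (hDanti : ∀ p q (x : D p q), Dh p (q + 1) (Dv p q x) + Dv (p + 1) q (Dh p q x) = 0)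
    -- the columns are exact:
    (hcols : ∀ p q (x : D p (q + 1)), Dv p (q + 1) x = 0 → ∃ y : D p q, Dv p q y = x) :
    ∀ (n : ℤ) (a : ∀ p, D p (n + 1 - p)),
      (∃ k : ℤ, ∀ p < k, a p = 0) →
      totd D Dh Dv (n + 1) a = 0 →
      ∃ b : ∀ p, D p (n - p), (∃ k : ℤ, ∀ p < k, b p = 0) ∧ totd D Dh Dv n b = a := by
  rintro n a ⟨k, hk⟩ ha
  have cocy : ∀ p : ℤ, castM (R := R) D (by omega : p - 1 + 1 = p)
      (by omega : n + 1 - (p - 1) = n + 1 + 1 - p) (Dh (p - 1) (n + 1 - (p - 1)) (a (p - 1)))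
      + castM (R := R) D rfl (by omega : n + 1 - p + 1 = n + 1 + 1 - p)
        (Dv p (n + 1 - p) (a p)) = 0 := by
    intro p
    have h := congrFun ha p
    rw [totd_apply] at h
    simpa using h
  have hco : ∀ p p' : ℤ, ∀ h : p' = p - 1,
      Dv p (n + 1 - p) (a p) = castM (R := R) D (by omega : p' + 1 = p)
        (by omega : n + 1 - p' = n + 1 - p + 1) (-(Dh p' (n + 1 - p') (a p'))) := by
    rintro p p' rfl
    apply castM_inj (R := R) (D := D) (rfl : p = p) (by omega : n + 1 - p + 1 = n + 1 + 1 - p)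
    rw [castM_castM, map_neg]
    exact eq_neg_of_add_eq_zero_right (cocy p)
  have hk0 : a (k - 1) = 0 := hk _ (by omega)
  have hbbex : ∃ bb : ∀ p, D p (n - p), (∀ p, p < k → bb p = 0) ∧
      (∀ (m : ℕ) (p : ℤ), ∀ hp : p = k + (m : ℤ), ∀ (e1 : k + (m : ℤ) = p)
        (e2 : n - (k + (m : ℤ)) = n - p),
        bb p = castM (R := R) D e1 e2
          (chain Dh Dv n a hDhh hDanti hcols hco hk0 m).1) := by
    refine ⟨fun p => if h : k ≤ p then
        castM (R := R) D (by omega : k + (((p - k).toNat : ℕ) : ℤ) = p) (by omega)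
          (chain Dh Dv n a hDhh hDanti hcols hco hk0 (p - k).toNat).1 else 0,
      fun p hp => dif_neg (by omega), ?_⟩
    intro m p hp e1 e2
    subst hp
    dsimp only
    rw [dif_pos (show k ≤ k + (m : ℤ) by omega)]
    exact chain_congr Dh Dv n a hDhh hDanti hcols hco hk0 (by omega) _ _ _ _
  obtain ⟨bb, hbb0, hbbe⟩ := hbbex
  refine ⟨bb, ⟨k, hbb0⟩, ?_⟩
  funext p
  rw [totd_apply]
  by_cases hpk : p < k
  · rw [hbb0 p hpk, hbb0 (p - 1) (by omega), hk p hpk]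
    simp
  · obtain ⟨m, rfl⟩ : ∃ m : ℕ, p = k + (m : ℤ) := ⟨(p - k).toNat, by omega⟩
    cases m with
    | zero =>
      rw [hbb0 (k + ((0 : ℕ) : ℤ) - 1) (by omega),
        hbbe 0 (k + ((0 : ℕ) : ℤ)) rfl rfl rfl, map_zero, map_zero, zero_add,
        Dv_castM, chain_zero_spec Dh Dv n a hDhh hDanti hcols hco hk0,
        castM_castM, castM_castM, a_congr n a]
    | succ m =>
      rw [hbbe (m + 1) (k + ((m + 1 : ℕ) : ℤ)) rfl rfl rfl,
        hbbe m (k + ((m + 1 : ℕ) : ℤ) - 1) (by push_cast; omega) (by push_cast; omega)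
          (by push_cast; omega),
        Dv_castM, chain_succ_spec Dh Dv n a hDhh hDanti hcols hco hk0 m,
        Dh_castM, castM_castM, castM_castM, castM_castM, map_sub, castM_castM,
        a_congr n a]
      have hux : ∀ (u v : D (k + ((m + 1 : ℕ) : ℤ)) (n + 1 - (k + ((m + 1 : ℕ) : ℤ)))),
          u + (v - u) = v := fun u v => by abel
      exact hux _ _
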